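/- Every smooth n-dimensional manifold M admits a smooth embedding i : M → ℝ^{2n+1} whose image i(M) is a closed subset of ℝ^{2n+1}. -/

import Mathlib

set_option linter.unusedSectionVars false

open scoped Manifold ENNReal
open Set

noncomputable section

namespace WhitneyAux

open Function Module Topology
open scoped ContDiff

variable {n : ℕ} {M : Type*} [TopologicalSpace M]
  [ChartedSpace (EuclideanSpace ℝ (Fin n)) M]
  [IsManifold (𝓡 n) (⊤ : ℕ∞) M]
  [T2Space M] [SecondCountableTopology M]

lemma dimH_secant_le {F : Type*} [NormedAddCommGroup F] [NormedSpace ℝ F]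
    {u : M → F} (hu : ContMDiff (𝓡 n) 𝓘(ℝ, F) (⊤ : ℕ∞) u) :
    dimH {z : F | ∃ (x y : M) (t : ℝ), z = t • (u x - u y)} ≤ (2 * n + 1 : ℕ) := by
  classical
  obtain ⟨T, hTc, hTU⟩ := TopologicalSpace.isOpen_iUnion_countable
    (fun x : M => (chartAt (EuclideanSpace ℝ (Fin n)) x).source)
    (fun x => (chartAt _ x).open_source)
  have hTcover : ∀ x : M, ∃ c ∈ T, x ∈ (extChartAt (𝓡 n) c).source := by
    intro x
    have hx : x ∈ ⋃ c ∈ T, (chartAt (EuclideanSpace ℝ (Fin n)) c).source := by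
      rw [hTU]
      exact mem_iUnion.mpr ⟨x, mem_chart_source _ x⟩
    obtain ⟨c, hcT, hc⟩ := mem_iUnion₂.mp hx
    exact ⟨c, hcT, by simpa [extChartAt_source] using hc⟩
  let v : M → EuclideanSpace ℝ (Fin n) → F := fun c => u ∘ (extChartAt (𝓡 n) c).symm
  let O : M → Set (EuclideanSpace ℝ (Fin n)) := fun c => (extChartAt (𝓡 n) c).target
  let σ : M → M → (EuclideanSpace ℝ (Fin n)) × (EuclideanSpace ℝ (Fin n)) × ℝ → F :=
    fun c d p => p.2.2 • (v c p.1 - v d p.2.1)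
  have hsub : {z : F | ∃ (x y : M) (t : ℝ), z = t • (u x - u y)} ⊆
      ⋃ c ∈ T, ⋃ d ∈ T, σ c d '' ((O c) ×ˢ (O d) ×ˢ (univ : Set ℝ)) := by
    rintro z ⟨x, y, t, rfl⟩
    obtain ⟨c, hcT, hc⟩ := hTcover x
    obtain ⟨d, hdT, hd⟩ := hTcover y
    refine mem_iUnion₂.mpr ⟨c, hcT, mem_iUnion₂.mpr ⟨d, hdT, ?_⟩⟩
    refine ⟨(extChartAt (𝓡 n) c x, extChartAt (𝓡 n) d y, t),
      ⟨(extChartAt (𝓡 n) c).map_source hc, (extChartAt (𝓡 n) d).map_source hd, trivial⟩, ?_⟩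
    simp only [σ, v, Function.comp_apply, (extChartAt (𝓡 n) c).left_inv hc,
      (extChartAt (𝓡 n) d).left_inv hd]
  refine le_trans (dimH_mono hsub) ?_
  rw [dimH_bUnion hTc]
  refine iSup₂_le fun c _ => ?_
  rw [dimH_bUnion hTc]
  refine iSup₂_le fun d _ => ?_
  have hvsmooth : ∀ c : M, ContDiffOn ℝ ∞ (v c) (O c) := by
    intro c
    have h1 : ContMDiffOn 𝓘(ℝ, EuclideanSpace ℝ (Fin n)) 𝓘(ℝ, F) (⊤ : ℕ∞) (v c) (O c) :=
      hu.comp_contMDiffOn (contMDiffOn_extChartAt_symm c)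
    exact contMDiffOn_iff_contDiffOn.mp h1
  set Ω : Set ((EuclideanSpace ℝ (Fin n)) × (EuclideanSpace ℝ (Fin n)) × ℝ) :=
    (O c) ×ˢ (O d) ×ˢ (univ : Set ℝ) with hΩdef
  have hΩopen : IsOpen Ω :=
    (isOpen_extChartAt_target c).prod ((isOpen_extChartAt_target d).prod isOpen_univ)
  have hσ : ContDiffOn ℝ ∞ (σ c d) Ω := by
    have h1 : ContDiffOn ℝ ∞ (fun p : (EuclideanSpace ℝ (Fin n)) ×
        (EuclideanSpace ℝ (Fin n)) × ℝ => v c p.1) Ω :=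
      (hvsmooth c).comp contDiff_fst.contDiffOn (fun p hp => hp.1)
    have h2 : ContDiffOn ℝ ∞ (fun p : (EuclideanSpace ℝ (Fin n)) ×
        (EuclideanSpace ℝ (Fin n)) × ℝ => v d p.2.1) Ω :=
      (hvsmooth d).comp (contDiff_fst.comp contDiff_snd).contDiffOn (fun p hp => hp.2.1)
    exact ((contDiff_snd.comp contDiff_snd).contDiffOn).smul (h1.sub h2)
  have hlip : ∀ p ∈ Ω, ∃ C : NNReal, ∃ t ∈ nhdsWithin p Ω, LipschitzOnWith C (σ c d) t := by
    intro p hp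
    have hat : ContDiffAt ℝ 1 (σ c d) p :=
      ((hσ p hp).contDiffAt (hΩopen.mem_nhds hp)).of_le (by exact_mod_cast le_top)
    obtain ⟨C, t, ht, hl⟩ := hat.exists_lipschitzOnWith
    exact ⟨C, t, mem_nhdsWithin_of_mem_nhds ht, hl⟩
  refine le_trans (dimH_image_le_of_locally_lipschitzOn hlip) ?_
  refine le_trans (dimH_mono (subset_univ _)) ?_
  rw [Real.dimH_univ_eq_finrank]
  have : finrank ℝ ((EuclideanSpace ℝ (Fin n)) × (EuclideanSpace ℝ (Fin n)) × ℝ)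
      = 2 * n + 1 := by
    simp [Module.finrank_prod, finrank_euclideanSpace_fin]
    ring
  rw [this]

lemma exists_pad (k l : ℕ) (h : k ≤ l) :
    ∃ J : EuclideanSpace ℝ (Fin k) →L[ℝ] EuclideanSpace ℝ (Fin l), Function.Injective J := by
  classical
  let J₀ : EuclideanSpace ℝ (Fin k) →ₗ[ℝ] EuclideanSpace ℝ (Fin l) :=
    { toFun := fun v => WithLp.toLp 2 (fun i : Fin l => if hi : (i : ℕ) < k then v ⟨i, hi⟩ else 0)
      map_add' := by
        intro v w; ext i; by_cases hi : (i : ℕ) < k <;>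
          simp [PiLp.add_apply, hi]
      map_smul' := by
        intro c v; ext i; by_cases hi : (i : ℕ) < k <;>
          simp [PiLp.smul_apply, hi, smul_eq_mul] }
  refine ⟨J₀.toContinuousLinearMap, ?_⟩
  intro v w hvw
  ext i
  have hi : ((⟨i, lt_of_lt_of_le i.2 h⟩ : Fin l) : ℕ) < k := i.2
  have := congrArg (fun (z : EuclideanSpace ℝ (Fin l)) => z ⟨i, lt_of_lt_of_le i.2 h⟩) hvw
  simpa [J₀, LinearMap.coe_mk, hi] using this

lemma exists_proj_step {m : ℕ} (hm : 2 * n + 1 < m) {g : M → EuclideanSpace ℝ (Fin m)}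
    (hg : ContMDiff (𝓡 n) 𝓘(ℝ, EuclideanSpace ℝ (Fin m)) (⊤ : ℕ∞) g) :
    ∃ π : EuclideanSpace ℝ (Fin m) →L[ℝ] EuclideanSpace ℝ (Fin (m - 1)),
      ∀ x y : M, π (g x) = π (g y) → g x = g y := by
  classical
  let S : Set (EuclideanSpace ℝ (Fin m)) := {z | ∃ (x y : M) (t : ℝ), z = t • (g x - g y)}
  have hS : dimH S ≤ (2 * n + 1 : ℕ) := dimH_secant_le hg
  have hbad : dimH (S ∪ {0}) < finrank ℝ (EuclideanSpace ℝ (Fin m)) := by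
    rw [dimH_union, finrank_euclideanSpace_fin]
    refine lt_of_le_of_lt (max_le hS (by simp [dimH_singleton])) ?_
    exact_mod_cast hm
  obtain ⟨w, hw'⟩ := (dense_compl_of_dimH_lt_finrank hbad).nonempty
  rw [Set.mem_compl_iff] at hw'
  have hw0 : w ≠ 0 := fun h => hw' (Or.inr (by simp [h]))
  have hKfin : finrank ℝ ((ℝ ∙ w)ᗮ : Submodule ℝ (EuclideanSpace ℝ (Fin m))) = m - 1 := by
    have h1 : finrank ℝ (ℝ ∙ w) = 1 := finrank_span_singleton hw0
    have h2 := Submodule.finrank_add_finrank_orthogonal (K := ℝ ∙ w)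
    rw [h1, finrank_euclideanSpace_fin] at h2
    omega
  let e : ((ℝ ∙ w)ᗮ : Submodule ℝ (EuclideanSpace ℝ (Fin m))) ≃L[ℝ] EuclideanSpace ℝ (Fin (m - 1)) :=
    ContinuousLinearEquiv.ofFinrankEq (by rw [hKfin, finrank_euclideanSpace_fin])
  refine ⟨e.toContinuousLinearMap ∘L Submodule.orthogonalProjectionOnto (ℝ ∙ w)ᗮ, ?_⟩
  intro x y h
  simp only [ContinuousLinearMap.comp_apply, ContinuousLinearEquiv.coe_coe] at h
  have h2 : Submodule.orthogonalProjectionOnto (ℝ ∙ w)ᗮ (g x) = Submodule.orthogonalProjectionOnto (ℝ ∙ w)ᗮ (g y) :=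
    e.injective h
  have h3 : g x - g y ∈ ((ℝ ∙ w)ᗮ)ᗮ := by
    have h4 : Submodule.orthogonalProjectionOnto (ℝ ∙ w)ᗮ (g x - g y) = 0 := by rw [map_sub, h2, sub_self]
    rwa [Submodule.orthogonalProjectionOnto_eq_zero_iff] at h4
  rw [Submodule.orthogonal_orthogonal] at h3
  obtain ⟨c, hc⟩ := Submodule.mem_span_singleton.mp h3
  by_cases hc0 : c = 0
  · rw [hc0, zero_smul] at hc
    exact sub_eq_zero.mp hc.symm
  · exfalso
    refine hw' (Or.inl ⟨x, y, c⁻¹, ?_⟩)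
    rw [← hc, smul_smul, inv_mul_cancel₀ hc0, one_smul]

lemma exists_reduce : ∀ (m : ℕ) (g : M → EuclideanSpace ℝ (Fin m)),
    ContMDiff (𝓡 n) 𝓘(ℝ, EuclideanSpace ℝ (Fin m)) (⊤ : ℕ∞) g →
    ∃ L : EuclideanSpace ℝ (Fin m) →L[ℝ] EuclideanSpace ℝ (Fin (2 * n + 1)),
      ContMDiff (𝓡 n) 𝓘(ℝ, EuclideanSpace ℝ (Fin (2 * n + 1))) (⊤ : ℕ∞) (fun x => L (g x)) ∧
      (∀ x y : M, L (g x) = L (g y) → g x = g y) := by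
  intro m
  induction m using Nat.strong_induction_on with
  | _ m ih =>
    intro g hg
    by_cases hm : m ≤ 2 * n + 1
    · obtain ⟨J, hJ⟩ := exists_pad m (2 * n + 1) hm
      exact ⟨J, J.contMDiff.comp hg, fun x y h => hJ h⟩
    · push_neg at hm
      obtain ⟨π, hπ⟩ := exists_proj_step hm hg
      have hg' : ContMDiff (𝓡 n) 𝓘(ℝ, EuclideanSpace ℝ (Fin (m - 1))) (⊤ : ℕ∞)
          (fun x => π (g x)) := π.contMDiff.comp hg
      obtain ⟨L', hL's, hL'⟩ := ih (m - 1) (by omega) _ hg'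
      exact ⟨L'.comp π, hL's, fun x y h => hπ x y (hL' x y h)⟩

lemma exists_injOn_compact {s : Set M} (hs : IsCompact s) :
    ∃ ψ : M → EuclideanSpace ℝ (Fin (2 * n + 1)),
      ContMDiff (𝓡 n) 𝓘(ℝ, EuclideanSpace ℝ (Fin (2 * n + 1))) (⊤ : ℕ∞) ψ ∧ Set.InjOn ψ s := by
  classical
  let b : ∀ x : M, SmoothBumpFunction (𝓡 n) x := fun x => Classical.arbitrary _
  let U : s → Set M := fun x => interior {y | b x y = 1}
  have hxU : ∀ x : s, (x : M) ∈ U x := by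
    intro x
    refine mem_interior_iff_mem_nhds.mpr ?_
    filter_upwards [(b x).eventuallyEq_one] with y hy
    simpa using hy
  obtain ⟨t, hts⟩ := hs.elim_finite_subcover U (fun x => isOpen_interior)
    (fun x hx => mem_iUnion.mpr ⟨⟨x, hx⟩, hxU _⟩)
  let fb : SmoothBumpCovering t (𝓡 n) M s :=
    { c := fun i => ((i : s) : M)
      toFun := fun i => b ((i : s) : M)
      c_mem' := fun i => (i : s).2
      locallyFinite' := locallyFinite_of_finite _
      eventuallyEq_one' := by
        intro x hx
        obtain ⟨i, hit, hiU⟩ := mem_iUnion₂.mp (hts hx)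
        refine ⟨⟨i, hit⟩, ?_⟩
        filter_upwards [isOpen_interior.mem_nhds hiU] with y hy
        simpa using interior_subset hy }
  letI : IsNoetherian ℝ (EuclideanSpace ℝ (Fin n) × ℝ) := IsNoetherian.iff_fg.2 inferInstance
  letI : FiniteDimensional ℝ (↥t → EuclideanSpace ℝ (Fin n) × ℝ) :=
    IsNoetherian.iff_fg.1 inferInstance
  let eEF : (↥t → EuclideanSpace ℝ (Fin n) × ℝ) ≃L[ℝ]
      EuclideanSpace ℝ (Fin (finrank ℝ (↥t → EuclideanSpace ℝ (Fin n) × ℝ))) :=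
    ContinuousLinearEquiv.ofFinrankEq finrank_euclideanSpace_fin.symm
  let ePT : M → (↥t → EuclideanSpace ℝ (Fin n) × ℝ) :=
    fun x i => (fb i x • extChartAt (𝓡 n) (fb.c i) x, fb i x)
  have hψ0 : ContMDiff (𝓡 n) 𝓘(ℝ, ↥t → EuclideanSpace ℝ (Fin n) × ℝ) (⊤ : ℕ∞)
      ePT :=
    contMDiff_pi_space.2 fun i =>
      ((fb i).contMDiff_smul contMDiffOn_extChartAt).prodMk_space (fb i).contMDiff
  have hinj0 : InjOn ePT s := by
    intro x hx y _ h
    simp only [ePT, funext_iff] at h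
    obtain ⟨h₁, h₂⟩ := Prod.mk_inj.1 (h (fb.ind x hx))
    rw [fb.apply_ind x hx] at h₂
    rw [← h₂, fb.apply_ind x hx, one_smul, one_smul] at h₁
    have := fb.mem_extChartAt_source_of_eq_one h₂.symm
    exact (extChartAt (𝓡 n) (fb.c _)).injOn (fb.mem_extChartAt_ind_source x hx) this h₁
  have hψ1 : ContMDiff (𝓡 n)
      𝓘(ℝ, EuclideanSpace ℝ (Fin (finrank ℝ (↥t → EuclideanSpace ℝ (Fin n) × ℝ)))) (⊤ : ℕ∞)
      (fun x => eEF (ePT x)) :=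
    eEF.toDiffeomorph.contMDiff.comp hψ0
  obtain ⟨L, hLs, hL⟩ := exists_reduce _ _ hψ1
  exact ⟨fun x => L (eEF (ePT x)), hLs,
    fun x hx y hy h => hinj0 hx hy (eEF.injective (hL x y h))⟩

lemma exists_proper_smooth :
    ∃ f : M → ℝ, ContMDiff (𝓡 n) 𝓘(ℝ, ℝ) (⊤ : ℕ∞) f ∧ (∀ x, 1 ≤ f x) ∧
      ∀ c : ℝ, IsCompact {x : M | f x ≤ c} := by
  classical
  haveI : LocallyCompactSpace M :=
    Manifold.locallyCompact_of_finiteDimensional (M := M) (𝓡 n)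
  let K : CompactExhaustion M := CompactExhaustion.choice M
  have hex : ∀ k : ℕ, ∃ χ : C^(⊤ : ℕ∞)⟮(𝓡 n), M; 𝓘(ℝ), ℝ⟯,
      Set.EqOn χ 0 ((interior (K (k + 1)))ᶜ) ∧ Set.EqOn χ 1 (K k) ∧
      ∀ x, χ x ∈ Icc (0 : ℝ) 1 := by
    intro k
    refine exists_contMDiffMap_zero_one_of_isClosed (𝓡 n) isOpen_interior.isClosed_compl
      (K.isCompact k).isClosed ?_
    exact disjoint_compl_left.mono_right (K.subset_interior_succ k)
  choose χ hχ0 hχ1 hχm using hex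
  let θ : ℕ → M → ℝ := fun k x => 1 - χ k x
  have hθ0 : ∀ k, ∀ x ∈ K k, θ k x = 0 := by
    intro k x hx
    simp [θ, hχ1 k hx]
  have hθ1 : ∀ k, ∀ x, x ∉ interior (K (k + 1)) → θ k x = 1 := by
    intro k x hx
    simp [θ, hχ0 k hx]
  have hθnonneg : ∀ k x, 0 ≤ θ k x := by
    intro k x
    have := (hχm k x).2
    simp only [θ]
    linarith
  have hsupp : ∀ k, Function.support (θ k) ⊆ (K k)ᶜ := by
    intro k x hx
    exact fun hxK => hx (hθ0 k x hxK)
  have hlf : LocallyFinite fun k => Function.support (θ k) := by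
    intro x
    obtain ⟨m, hm⟩ := K.exists_mem x
    refine ⟨interior (K (m + 1)), isOpen_interior.mem_nhds
      (K.subset_interior_succ m hm), ?_⟩
    refine Set.Finite.subset (Set.finite_Iic m) ?_
    intro k hk
    rw [Set.mem_Iic]
    by_contra h
    push_neg at h
    obtain ⟨y, hy1, hy2⟩ := hk
    have hyK : y ∈ K k := K.subset (by omega) (interior_subset hy2)
    exact hsupp k hy1 hyK
  let f : M → ℝ := fun x => 1 + ∑ᶠ k, θ k x
  have hsmooth : ContMDiff (𝓡 n) 𝓘(ℝ, ℝ) (⊤ : ℕ∞) f :=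
    contMDiff_const.add (contMDiff_finsum
      (fun k => contMDiff_const.sub (χ k).contMDiff) hlf)
  have hfin : ∀ x : M, (Function.support fun k => θ k x).Finite := by
    intro x
    exact hlf.point_finite x
  have hsumnonneg : ∀ x : M, 0 ≤ ∑ᶠ k, θ k x := fun x =>
    finsum_nonneg (fun k => hθnonneg k x)
  refine ⟨f, hsmooth, fun x => by simpa [f] using hsumnonneg x, ?_⟩
  intro c
  have hsub : {x : M | f x ≤ c} ⊆ K ⌈c⌉₊ := by
    intro x hx
    by_contra hxK
    have hbig : ∀ k < ⌈c⌉₊, θ k x = 1 := by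
      intro k hk
      refine hθ1 k x fun hint => hxK (K.subset (by omega) (interior_subset hint))
    have hsum : (⌈c⌉₊ : ℝ) ≤ ∑ᶠ k, θ k x := by
      rw [finsum_eq_sum _ (hfin x)]
      have hsubset : Finset.range ⌈c⌉₊ ⊆ (hfin x).toFinset := by
        intro k hk
        rw [Set.Finite.mem_toFinset, Function.mem_support,
          hbig k (Finset.mem_range.mp hk)]
        norm_num
      calc (⌈c⌉₊ : ℝ) = ∑ k ∈ Finset.range ⌈c⌉₊, θ k x := by
            rw [Finset.sum_congr rfl fun k hk => hbig k (Finset.mem_range.mp hk)]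
            simp
        _ ≤ ∑ k ∈ (hfin x).toFinset, θ k x :=
            Finset.sum_le_sum_of_subset_of_nonneg hsubset fun k _ _ => hθnonneg k x
    have : f x ≤ c := hx
    have hc : c ≤ (⌈c⌉₊ : ℝ) := Nat.le_ceil c
    have : (1 : ℝ) + (⌈c⌉₊ : ℝ) ≤ c := le_trans (by simpa [f] using add_le_add_left hsum 1) this
    linarith
  exact (K.isCompact _).of_isClosed_subset
    (isClosed_le hsmooth.continuous continuous_const) hsub

lemma exists_bounded_pair :
    ∃ (g : M → EuclideanSpace ℝ (Fin (2 * n + 1))) (f : M → ℝ),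
      ContMDiff (𝓡 n) 𝓘(ℝ, EuclideanSpace ℝ (Fin (2 * n + 1))) (⊤ : ℕ∞) g ∧
      ContMDiff (𝓡 n) 𝓘(ℝ, ℝ) (⊤ : ℕ∞) f ∧ (∀ x, 1 ≤ f x) ∧
      (∀ c : ℝ, IsCompact {x : M | f x ≤ c}) ∧
      (∃ B : ℝ, ∀ x, ‖g x‖ ≤ B) ∧
      (∀ x y : M, g x = g y → f x = f y → x = y) := by
  classical
  haveI : LocallyCompactSpace M :=
    Manifold.locallyCompact_of_finiteDimensional (M := M) (𝓡 n)
  obtain ⟨f, hfs, hf1, hfc⟩ := exists_proper_smooth (n := n) (M := M)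
  have hfcont : Continuous f := hfs.continuous
  -- families of sets
  let A : ℕ → Set M := fun k => f ⁻¹' Icc ((k : ℝ) - 1/6) ((k : ℝ) + 7/6)
  let V : ℕ → Set M := fun k => f ⁻¹' Ioo ((k : ℝ) - 1/3) ((k : ℝ) + 4/3)
  let sk : ℕ → Set M := fun k => f ⁻¹' Icc ((k : ℝ) - 1/3) ((k : ℝ) + 4/3)
  let N : ℕ → Set M := fun k => f ⁻¹' Ioo ((k : ℝ) - 1/6) ((k : ℝ) + 7/6)
  have hVopen : ∀ k, IsOpen (V k) := fun k => isOpen_Ioo.preimage hfcont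
  have hNopen : ∀ k, IsOpen (N k) := fun k => isOpen_Ioo.preimage hfcont
  have hAclosed : ∀ k, IsClosed (A k) := fun k => isClosed_Icc.preimage hfcont
  have hskclosed : ∀ k, IsClosed (sk k) := fun k => isClosed_Icc.preimage hfcont
  have hskcompact : ∀ k, IsCompact (sk k) := by
    intro k
    refine (hfc ((k : ℝ) + 4/3)).of_isClosed_subset (hskclosed k) ?_
    intro x hx
    exact hx.2
  have hAV : ∀ k, A k ⊆ V k := by
    intro k x hx
    obtain ⟨h1, h2⟩ := hx
    exact ⟨by linarith, by linarith⟩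
  have hNA : ∀ k, N k ⊆ A k := by
    intro k x hx
    obtain ⟨h1, h2⟩ := hx
    exact ⟨by linarith, by linarith⟩
  have hNsk : ∀ k, N k ⊆ sk k := by
    intro k x hx
    obtain ⟨h1, h2⟩ := hx
    exact ⟨by linarith, by linarith⟩
  have hVsk : ∀ k, V k ⊆ sk k := by
    intro k x hx
    obtain ⟨h1, h2⟩ := hx
    exact ⟨le_of_lt h1, le_of_lt h2⟩
  have hVdisj : ∀ k l : ℕ, k < l → l % 2 = k % 2 → Disjoint (V k) (V l) := by
    intro k l hkl hpar
    have hl2 : k + 2 ≤ l := by omega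
    rw [Set.disjoint_left]
    intro x hxk hxl
    have h1 : f x < (k : ℝ) + 4/3 := hxk.2
    have h2 : (l : ℝ) - 1/3 < f x := hxl.1
    have h3 : (k : ℝ) + 2 ≤ (l : ℝ) := by exact_mod_cast hl2
    linarith
  -- bump functions
  have hχex : ∀ k : ℕ, ∃ χ : C^(⊤ : ℕ∞)⟮(𝓡 n), M; 𝓘(ℝ), ℝ⟯,
      Set.EqOn χ 0 ((V k)ᶜ) ∧ Set.EqOn χ 1 (A k) ∧ ∀ x, χ x ∈ Icc (0 : ℝ) 1 := by
    intro k
    refine exists_contMDiffMap_zero_one_of_isClosed (𝓡 n) (hVopen k).isClosed_compl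
      (hAclosed k) ?_
    exact disjoint_compl_left.mono_right (hAV k)
  choose χ hχ0 hχ1 hχm using hχex
  -- local injective maps, rescaled
  have hψex : ∀ k : ℕ, ∃ ψ : M → EuclideanSpace ℝ (Fin (2 * n + 1)),
      ContMDiff (𝓡 n) 𝓘(ℝ, EuclideanSpace ℝ (Fin (2 * n + 1))) (⊤ : ℕ∞) ψ ∧
      Set.InjOn ψ (sk k) ∧ ∀ x ∈ sk k, ‖ψ x‖ ≤ 1 := by
    intro k
    obtain ⟨ψ, hψs, hψi⟩ := exists_injOn_compact (n := n) (hskcompact k)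
    obtain ⟨C, hC⟩ := (hskcompact k).exists_bound_of_continuousOn
      hψs.continuous.continuousOn
    set c : ℝ := max C 1 with hc
    have hcpos : 0 < c := lt_of_lt_of_le one_pos (le_max_right _ _)
    refine ⟨fun x => c⁻¹ • ψ x, (contMDiff_const (I' := 𝓘(ℝ, ℝ)) (c := c⁻¹)).smul hψs, ?_, ?_⟩
    · intro x hx y hy h
      exact hψi hx hy (smul_right_injective _ (inv_ne_zero (ne_of_gt hcpos)) h)
    · intro x hx
      rw [norm_smul, norm_inv, Real.norm_eq_abs, abs_of_pos hcpos]
      rw [inv_mul_le_iff₀ hcpos, mul_one]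
      exact le_trans (hC x hx) (le_max_left _ _)
  choose ψ hψs hψi hψb using hψex
  -- glued pieces
  let θ : ℕ → M → EuclideanSpace ℝ (Fin (2 * n + 1)) := fun k x => χ k x • ψ k x
  have hθs : ∀ k, ContMDiff (𝓡 n) 𝓘(ℝ, EuclideanSpace ℝ (Fin (2 * n + 1))) (⊤ : ℕ∞) (θ k) :=
    fun k => (χ k).contMDiff.smul (hψs k)
  have hθsupp : ∀ k, Function.support (θ k) ⊆ V k := by
    intro k x hx
    by_contra hxV
    exact hx (by simp [θ, hχ0 k hxV])
  have hθA : ∀ k, ∀ x ∈ A k, θ k x = ψ k x := by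
    intro k x hx
    simp [θ, hχ1 k hx]
  have hθb : ∀ k x, ‖θ k x‖ ≤ 1 := by
    intro k x
    by_cases hx : x ∈ V k
    · have h1 : |χ k x| ≤ 1 := abs_le.mpr ⟨by linarith [(hχm k x).1], (hχm k x).2⟩
      show ‖χ k x • ψ k x‖ ≤ 1
      rw [norm_smul, Real.norm_eq_abs]
      calc |χ k x| * ‖ψ k x‖ ≤ 1 * 1 := by
            exact mul_le_mul h1 (hψb k x (hVsk k hx)) (norm_nonneg _) one_pos.le
        _ = 1 := by ring
    · simp [θ, hχ0 k hx]
  -- the two parity sums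
  let Φ : ℕ → M → EuclideanSpace ℝ (Fin (2 * n + 1)) := fun p x => ∑ᶠ k : ℕ, θ (2 * k + p) x
  have hΦlf : ∀ p : ℕ, LocallyFinite fun k : ℕ => Function.support (θ (2 * k + p)) := by
    intro p
    intro x
    refine ⟨f ⁻¹' Ioo (f x - 1) (f x + 1),
      (isOpen_Ioo.preimage hfcont).mem_nhds (by constructor <;> [linarith; linarith]), ?_⟩
    refine Set.Finite.subset (Set.finite_Iic ⌈f x + 2⌉₊) ?_
    intro k hk
    obtain ⟨y, hy1, hy2⟩ := hk
    have hyV : y ∈ V (2 * k + p) := hθsupp _ hy1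
    have h1 : ((2 * k + p : ℕ) : ℝ) - 1/3 < f y := hyV.1
    have h2 : f y < f x + 1 := hy2.2
    have h3 : ((2 * k + p : ℕ) : ℝ) < f x + 2 := by push_cast at h1 ⊢; linarith
    have h4 : (2 * k + p : ℕ) < ⌈f x + 2⌉₊ := Nat.lt_ceil.mpr h3
    rw [Set.mem_Iic]
    omega
  have hΦs : ∀ p : ℕ, ContMDiff (𝓡 n) 𝓘(ℝ, EuclideanSpace ℝ (Fin (2 * n + 1))) (⊤ : ℕ∞) (Φ p) :=
    fun p => contMDiff_finsum (fun k => hθs (2 * k + p)) (hΦlf p)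
  have hid : ∀ p k : ℕ, k % 2 = p → ∀ x ∈ N k, Φ p x = ψ k x := by
    intro p k hpar x hx
    have hk2 : 2 * (k / 2) + p = k := by omega
    have hxVk : x ∈ V k := hAV k (hNA k hx)
    have hsingle : ∀ j : ℕ, j ≠ k / 2 → θ (2 * j + p) x = 0 := by
      intro j hj
      by_contra h0
      have hxVj : x ∈ V (2 * j + p) := hθsupp _ (Function.mem_support.mpr h0)
      rcases lt_trichotomy (2 * j + p) k with hlt | heq | hgt
      · exact Set.disjoint_left.mp (hVdisj _ _ hlt (by omega)) hxVj hxVk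
      · exact hj (by omega)
      · exact Set.disjoint_left.mp (hVdisj _ _ hgt (by omega)) hxVk hxVj
    calc Φ p x = θ (2 * (k / 2) + p) x := finsum_eq_single _ _ hsingle
      _ = θ k x := by rw [hk2]
      _ = ψ k x := hθA k x (hNA k hx)
  have hΦb : ∀ (p : ℕ) (x : M), ‖Φ p x‖ ≤ 1 := by
    intro p x
    by_cases hall : ∀ j : ℕ, θ (2 * j + p) x = 0
    · have : Φ p x = 0 := finsum_eq_zero_of_forall_eq_zero hall
      rw [this, norm_zero]
      norm_num
    · push_neg at hall
      obtain ⟨j₀, hj₀⟩ := hall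
      have hxV : x ∈ V (2 * j₀ + p) := hθsupp _ (Function.mem_support.mpr hj₀)
      have hsingle : ∀ j, j ≠ j₀ → θ (2 * j + p) x = 0 := by
        intro j hj
        by_contra h0
        have hxVj : x ∈ V (2 * j + p) := hθsupp _ (Function.mem_support.mpr h0)
        rcases lt_trichotomy (2 * j + p) (2 * j₀ + p) with hlt | heq | hgt
        · exact Set.disjoint_left.mp (hVdisj _ _ hlt (by omega)) hxVj hxV
        · exact hj (by omega)
        · exact Set.disjoint_left.mp (hVdisj _ _ hgt (by omega)) hxV hxVj
      have : Φ p x = θ (2 * j₀ + p) x := finsum_eq_single _ _ hsingle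
      rw [this]
      exact hθb _ x
  have hpair : ∀ x y : M, Φ 0 x = Φ 0 y → Φ 1 x = Φ 1 y → f x = f y → x = y := by
    intro x y h0 h1 hfxy
    set k := ⌊f x⌋₊ with hk
    have hkle : (k : ℝ) ≤ f x := Nat.floor_le (by linarith [hf1 x])
    have hklt : f x < (k : ℝ) + 1 := Nat.lt_floor_add_one (f x)
    have hxN : x ∈ N k := by
      refine Set.mem_preimage.mpr (Set.mem_Ioo.mpr ⟨by linarith, by linarith⟩)
    have hyN : y ∈ N k := by
      refine Set.mem_preimage.mpr (Set.mem_Ioo.mpr ⟨?_, ?_⟩) <;> rw [← hfxy]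
      · linarith
      · linarith
    have hΦeq : Φ (k % 2) x = Φ (k % 2) y := by
      rcases Nat.mod_two_eq_zero_or_one k with h | h <;> rw [h]
      · exact h0
      · exact h1
    have hidx := hid (k % 2) k rfl x hxN
    have hidy := hid (k % 2) k rfl y hyN
    refine hψi k (hNsk k hxN) (hNsk k hyN) ?_
    rw [← hidx, ← hidy]
    exact hΦeq
  let e : (EuclideanSpace ℝ (Fin (2 * n + 1)) × EuclideanSpace ℝ (Fin (2 * n + 1))) ≃L[ℝ]
      EuclideanSpace ℝ (Fin (4 * n + 2)) :=
    ContinuousLinearEquiv.ofFinrankEq (by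
      simp [Module.finrank_prod, finrank_euclideanSpace_fin]
      ring)
  have hpairs : ContMDiff (𝓡 n)
      𝓘(ℝ, EuclideanSpace ℝ (Fin (2 * n + 1)) × EuclideanSpace ℝ (Fin (2 * n + 1))) (⊤ : ℕ∞)
      (fun x => (Φ 0 x, Φ 1 x)) := (hΦs 0).prodMk_space (hΦs 1)
  have hg1 : ContMDiff (𝓡 n) 𝓘(ℝ, EuclideanSpace ℝ (Fin (4 * n + 2))) (⊤ : ℕ∞)
      (fun x => e (Φ 0 x, Φ 1 x)) := e.toDiffeomorph.contMDiff.comp hpairs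
  obtain ⟨L, hLs, hL⟩ := exists_reduce _ _ hg1
  refine ⟨fun x => L (e (Φ 0 x, Φ 1 x)), f, hLs, hfs, hf1, hfc, ?_, ?_⟩
  · refine ⟨‖L‖ * ‖e.toContinuousLinearMap‖, fun x => ?_⟩
    calc ‖L (e (Φ 0 x, Φ 1 x))‖ ≤ ‖L‖ * ‖e (Φ 0 x, Φ 1 x)‖ := L.le_opNorm _
      _ ≤ ‖L‖ * (‖e.toContinuousLinearMap‖ * ‖(Φ 0 x, Φ 1 x)‖) := by
          refine mul_le_mul_of_nonneg_left ?_ (norm_nonneg _)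
          simpa using e.toContinuousLinearMap.le_opNorm (Φ 0 x, Φ 1 x)
      _ ≤ ‖L‖ * (‖e.toContinuousLinearMap‖ * 1) := by
          refine mul_le_mul_of_nonneg_left
            (mul_le_mul_of_nonneg_left ?_ (norm_nonneg _)) (norm_nonneg _)
          rw [Prod.norm_def]
          exact max_le (hΦb 0 x) (hΦb 1 x)
      _ = ‖L‖ * ‖e.toContinuousLinearMap‖ := by ring
  · intro x y hgxy hfxy
    have h1 := hL x y hgxy
    have h2 := e.injective h1
    rw [Prod.mk.injEq] at h2
    exact hpair x y h2.1 h2.2 hfxy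

end WhitneyAux

end

/-- Whitney embedding theorem with closed image: every smooth `n`-manifold admits a
smooth embedding into `ℝ^{2n+1}` as a closed subset. -/
theorem whitney_embedding_closed_image (n : ℕ) (M : Type*) [TopologicalSpace M]
    [ChartedSpace (EuclideanSpace ℝ (Fin n)) M]
    [IsManifold (𝓡 n) (⊤ : ℕ∞) M]
    [T2Space M] [SecondCountableTopology M] :
    ∃ i : M → EuclideanSpace ℝ (Fin (2 * n + 1)),
      ContMDiff (𝓡 n) 𝓘(ℝ, EuclideanSpace ℝ (Fin (2 * n + 1))) (⊤ : ℕ∞) i ∧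
      Topology.IsEmbedding i ∧ IsClosed (range i) := by
  classical
  obtain ⟨g, f, hg, hf, hf1, hfc, ⟨B, hB⟩, hinj⟩ :=
    WhitneyAux.exists_bounded_pair (n := n) (M := M)
  let j : M → (EuclideanSpace ℝ (Fin (2 * n + 1))) × ℝ := fun x => (g x, f x)
  have hj : ContMDiff (𝓡 n) 𝓘(ℝ, (EuclideanSpace ℝ (Fin (2 * n + 1))) × ℝ) (⊤ : ℕ∞) j := by
    exact hg.prodMk_space hf
  let S : Set ((EuclideanSpace ℝ (Fin (2 * n + 1))) × ℝ) :=
    {z | ∃ (x y : M) (t : ℝ), z = t • (j x - j y)}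
  have hS : dimH S ≤ (2 * n + 1 : ℕ) := WhitneyAux.dimH_secant_le hj
  let L1 : EuclideanSpace ℝ (Fin (2 * n + 1)) →L[ℝ]
      (EuclideanSpace ℝ (Fin (2 * n + 1))) × ℝ := ContinuousLinearMap.inl ℝ _ _
  let L2 : ℝ →L[ℝ] (EuclideanSpace ℝ (Fin (2 * n + 1))) × ℝ := ContinuousLinearMap.inr ℝ _ _
  have h1 : dimH (Set.range L1) ≤ (2 * n + 1 : ℕ) := by
    refine le_trans L1.lipschitz.dimH_range_le ?_
    rw [Real.dimH_univ_eq_finrank]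
    simp [finrank_euclideanSpace_fin]
  have h2 : dimH (Set.range L2) ≤ (2 * n + 1 : ℕ) := by
    refine le_trans L2.lipschitz.dimH_range_le ?_
    rw [Real.dimH_univ_eq_finrank]
    exact_mod_cast by norm_num
  have hbad : dimH (S ∪ (Set.range L1 ∪ Set.range L2)) <
      Module.finrank ℝ ((EuclideanSpace ℝ (Fin (2 * n + 1))) × ℝ) := by
    have hfr : Module.finrank ℝ ((EuclideanSpace ℝ (Fin (2 * n + 1))) × ℝ) = 2 * n + 2 := by
      simp [Module.finrank_prod, finrank_euclideanSpace_fin]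
    rw [dimH_union, dimH_union, hfr]
    have hlt : ((2 * n + 1 : ℕ) : ℝ≥0∞) < ((2 * n + 2 : ℕ) : ℝ≥0∞) := by
      exact_mod_cast Nat.lt_succ_self (2 * n + 1)
    refine lt_of_le_of_lt (max_le hS (max_le h1 h2)) ?_
    exact_mod_cast hlt
  obtain ⟨v, hv'⟩ := (dense_compl_of_dimH_lt_finrank hbad).nonempty
  rw [Set.mem_compl_iff] at hv'
  have hc : v.2 ≠ 0 := by
    intro h0
    exact hv' (Or.inr (Or.inl ⟨v.1, by apply Prod.ext <;> simp [L1, h0]⟩))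
  have hw : v.1 ≠ 0 := by
    intro h0
    exact hv' (Or.inr (Or.inr ⟨v.2, by apply Prod.ext <;> simp [L2, h0]⟩))
  let i : M → EuclideanSpace ℝ (Fin (2 * n + 1)) := fun x => g x - (v.2⁻¹ * f x) • v.1
  have hismooth : ContMDiff (𝓡 n) 𝓘(ℝ, EuclideanSpace ℝ (Fin (2 * n + 1))) (⊤ : ℕ∞) i :=
    hg.sub ((contMDiff_const.mul hf).smul contMDiff_const)
  have hicont : Continuous i := hismooth.continuous
  have hiinj : Function.Injective i := by
    intro x y hxy
    have hxy' : g x - (v.2⁻¹ * f x) • v.1 = g y - (v.2⁻¹ * f y) • v.1 := hxy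
    have h1' : g x - g y = (v.2⁻¹ * (f x - f y)) • v.1 := by
      have h2' : g x - g y = (v.2⁻¹ * f x) • v.1 - (v.2⁻¹ * f y) • v.1 := by
        linear_combination (norm := module) hxy'
      rw [h2', ← sub_smul]
      congr 1
      ring
    set t : ℝ := v.2⁻¹ * (f x - f y) with ht
    have hjj : j x - j y = t • v := by
      have hsnd : f x - f y = t * v.2 := by rw [ht]; field_simp
      apply Prod.ext
      · simpa using h1'
      · simpa using hsnd
    by_cases hjxy : j x = j y
    · exact hinj x y (congrArg Prod.fst hjxy) (congrArg Prod.snd hjxy)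
    · exfalso
      have ht0 : t ≠ 0 := by
        intro h0
        rw [h0, zero_smul, sub_eq_zero] at hjj
        exact hjxy hjj
      refine hv' (Or.inl ⟨x, y, t⁻¹, ?_⟩)
      rw [hjj, smul_smul, inv_mul_cancel₀ ht0, one_smul]
  have hproper : ∀ K : Set (EuclideanSpace ℝ (Fin (2 * n + 1))),
      IsCompact K → IsCompact (i ⁻¹' K) := by
    intro K hK
    obtain ⟨R, hR⟩ := hK.isBounded.subset_closedBall 0
    have hv1pos : (0 : ℝ) < ‖v.1‖ := norm_pos_iff.mpr hw
    have hv2pos : (0 : ℝ) < |v.2| := abs_pos.mpr hc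
    have hsub : i ⁻¹' K ⊆ {x : M | f x ≤ (R + B) * |v.2| / ‖v.1‖} := by
      intro x hx
      have hxR : ‖i x‖ ≤ R := by
        simpa [Metric.mem_closedBall] using hR hx
      have hnorm : ‖(v.2⁻¹ * f x) • v.1‖ ≤ R + B := by
        have hgi : (v.2⁻¹ * f x) • v.1 = g x - i x := by simp [i]
        rw [hgi]
        refine le_trans (norm_sub_le _ _) ?_
        have := hB x
        linarith
      rw [norm_smul, Real.norm_eq_abs, abs_mul, abs_inv,
        abs_of_pos (lt_of_lt_of_le one_pos (hf1 x))] at hnorm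
      rw [Set.mem_setOf_eq, le_div_iff₀ hv1pos]
      have hmul := mul_le_mul_of_nonneg_right hnorm (le_of_lt hv2pos)
      have hne : |v.2| ≠ 0 := ne_of_gt hv2pos
      calc f x * ‖v.1‖ = |v.2|⁻¹ * f x * ‖v.1‖ * |v.2| := by field_simp
        _ ≤ (R + B) * |v.2| := hmul
    exact (hfc _).of_isClosed_subset (hK.isClosed.preimage hicont) hsub
  have hpm : IsProperMap i := isProperMap_iff_isCompact_preimage.mpr ⟨hicont, hproper⟩
  have hcemb : Topology.IsClosedEmbedding i :=
    Topology.IsClosedEmbedding.of_continuous_injective_isClosedMap hicont hiinj hpm.isClosedMap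
  exact ⟨i, hismooth, hcemb.toIsEmbedding, hcemb.isClosed_range⟩
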